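/- Let Λ ⊆ R^n be a lattice symmetric with respect to all coordinate axes (i.e., if (x_1,...,x_n) ∈ Λ then flipping the sign of any single coordinate gives a point of Λ), and let C ⊆ F_2^n be a linear binary code. Then the constellation Γ = Λ + ψ(C) is geometrically uniform: for any two points x, y ∈ Γ there is an isometry T of R^n with T(x) = y and T(Γ) = Γ. -/

import Mathlib

/-- The natural embedding of `F_2^n` into `ℝ^n` (Euclidean space). -/
noncomputable def psiR {n : ℕ} (c : Fin n → ZMod 2) : EuclideanSpace ℝ (Fin n) :=
  WithLp.toLp 2 (fun i => ((c i).val : ℝ))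

/-- Sign flip of the `i`-th coordinate. -/
noncomputable def flipCoord {n : ℕ} (i : Fin n) (x : EuclideanSpace ℝ (Fin n)) :
    EuclideanSpace ℝ (Fin n) :=
  WithLp.toLp 2 (fun j => if j = i then -x j else x j)

/-- The sign pattern of a codeword. -/
noncomputable def epsR {n : ℕ} (c : Fin n → ZMod 2) (i : Fin n) : ℝ :=
  if c i = 1 then -1 else 1

lemma epsR_sq {n : ℕ} (c : Fin n → ZMod 2) (i : Fin n) : epsR c i * epsR c i = 1 := by
  unfold epsR; split <;> norm_num

lemma abs_epsR {n : ℕ} (c : Fin n → ZMod 2) (i : Fin n) : |epsR c i| = 1 := by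
  unfold epsR; split <;> norm_num

/-- Coordinate sign flips as an isometry of Euclidean space. -/
noncomputable def sgnIso {n : ℕ} (c : Fin n → ZMod 2) :
    EuclideanSpace ℝ (Fin n) ≃ᵢ EuclideanSpace ℝ (Fin n) where
  toFun v := WithLp.toLp 2 (fun i => epsR c i * v i)
  invFun v := WithLp.toLp 2 (fun i => epsR c i * v i)
  left_inv v := PiLp.ext fun i => by
    show epsR c i * (epsR c i * v i) = v i
    rw [← mul_assoc, epsR_sq, one_mul]
  right_inv v := PiLp.ext fun i => by
    show epsR c i * (epsR c i * v i) = v i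
    rw [← mul_assoc, epsR_sq, one_mul]
  isometry_toFun := Isometry.of_dist_eq fun x y => by
    rw [EuclideanSpace.dist_eq, EuclideanSpace.dist_eq]
    congr 1
    refine Finset.sum_congr rfl fun i _ => ?_
    have : epsR c i * x i - epsR c i * y i = epsR c i * (x i - y i) := by ring
    show dist (epsR c i * x i) (epsR c i * y i) ^ 2 = dist (x i) (y i) ^ 2
    rw [Real.dist_eq, Real.dist_eq, this, abs_mul, abs_epsR, one_mul]

lemma zmod2_cases : ∀ a : ZMod 2, a = 0 ∨ a = 1 := by decide

lemma bitval (a b : ZMod 2) :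
    ((a + b).val : ℝ) = a.val + (if a = 1 then -1 else 1) * b.val := by
  have key : ∀ a : ZMod 2, a = 0 ∨ a = 1 := by decide
  rcases key a with rfl|rfl <;> rcases key b with rfl|rfl <;>
    simp [show (1+1:ZMod 2) = 0 from rfl]

/-- If `Λ ⊆ ℝ^n` is a lattice (a discrete additive subgroup) symmetric with respect to
all coordinate axes, and `C ⊆ F_2^n` is a linear binary code, then `Γ = Λ + ψ(C)` is
geometrically uniform: for any `x, y ∈ Γ` there is an isometry `T` of `ℝ^n` with
`T x = y` and `T '' Γ = Γ`. -/
theorem geometricallyUniform_lattice_add_code {n : ℕ}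
    (Λ : AddSubgroup (EuclideanSpace ℝ (Fin n)))
    (hdisc : DiscreteTopology Λ)
    (hsym : ∀ x ∈ Λ, ∀ i : Fin n, flipCoord i x ∈ Λ)
    (C : Submodule (ZMod 2) (Fin n → ZMod 2)) :
    ∀ x ∈ {v : EuclideanSpace ℝ (Fin n) | ∃ l ∈ Λ, ∃ c ∈ C, v = l + psiR c},
    ∀ y ∈ {v : EuclideanSpace ℝ (Fin n) | ∃ l ∈ Λ, ∃ c ∈ C, v = l + psiR c},
      ∃ T : EuclideanSpace ℝ (Fin n) ≃ᵢ EuclideanSpace ℝ (Fin n),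
        T x = y ∧
        T '' {v : EuclideanSpace ℝ (Fin n) | ∃ l ∈ Λ, ∃ c ∈ C, v = l + psiR c}
          = {v : EuclideanSpace ℝ (Fin n) | ∃ l ∈ Λ, ∃ c ∈ C, v = l + psiR c} := by
  set Γ : Set (EuclideanSpace ℝ (Fin n)) :=
    {v : EuclideanSpace ℝ (Fin n) | ∃ l ∈ Λ, ∃ c ∈ C, v = l + psiR c} with hΓ
  -- flips over a finite set of coordinates stay in Λ
  have flipSet : ∀ S : Finset (Fin n), ∀ l ∈ Λ,
      (WithLp.toLp 2 (fun i => if i ∈ S then -l i else l i) : EuclideanSpace ℝ (Fin n)) ∈ Λ := by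
    intro S
    induction S using Finset.induction_on with
    | empty => intro l hl; simpa using hl
    | @insert a S ha ih =>
      intro l hl
      have h1 := hsym _ (ih l hl) a
      have : flipCoord a (WithLp.toLp 2 (fun i => if i ∈ S then -l i else l i))
          = (WithLp.toLp 2 (fun i => if i ∈ insert a S then -l i else l i) : EuclideanSpace ℝ (Fin n)) := by
        ext i
        unfold flipCoord
        by_cases hia : i = a
        · subst hia; simp [ha, PiLp.toLp_apply]
        · simp [hia, Finset.mem_insert, PiLp.toLp_apply]
      rwa [this] at h1
  have flipEps : ∀ (c : Fin n → ZMod 2), ∀ l ∈ Λ,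
      (WithLp.toLp 2 (fun i => epsR c i * l i) : EuclideanSpace ℝ (Fin n)) ∈ Λ := by
    intro c l hl
    have := flipSet (Finset.univ.filter fun i => c i = 1) l hl
    have heq : (WithLp.toLp 2 (fun i => if i ∈ Finset.univ.filter (fun i => c i = 1) then -l i else l i) :
        EuclideanSpace ℝ (Fin n)) = WithLp.toLp 2 (fun i => epsR c i * l i) := by
      ext i
      simp only [PiLp.toLp_apply, Finset.mem_filter, Finset.mem_univ, true_and, epsR]
      split <;> ring
    rwa [heq] at this
  -- The basic isometry: v ↦ (l + psiR c) + sgnIso c v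
  have mapsTo : ∀ l ∈ Λ, ∀ c ∈ C, ∀ v ∈ Γ,
      (l + psiR c) + sgnIso c v ∈ Γ := by
    intro l hl c hc v hv
    obtain ⟨l', hl', c', hc', rfl⟩ := hv
    set lf : EuclideanSpace ℝ (Fin n) := WithLp.toLp 2 (fun i => epsR c i * l' i) with hlf
    refine ⟨l + lf, Λ.add_mem hl (flipEps c l' hl'), c + c', C.add_mem hc hc', ?_⟩
    ext i
    show l i + ((c i).val : ℝ) + epsR c i * (l' i + ((c' i).val : ℝ))
      = (l i + epsR c i * l' i) + ((c i + c' i).val : ℝ)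
    rw [bitval]
    unfold epsR
    ring
  -- per-point isometry F l c with F 0 = l + psiR c and F '' Γ = Γ
  have main : ∀ l ∈ Λ, ∀ c ∈ C,
      ∃ F : EuclideanSpace ℝ (Fin n) ≃ᵢ EuclideanSpace ℝ (Fin n),
        F 0 = l + psiR c ∧ F '' Γ = Γ := by
    intro l hl c hc
    refine ⟨(sgnIso c).trans (IsometryEquiv.addLeft (l + psiR c)), ?_, ?_⟩
    · show (l + psiR c) + sgnIso c 0 = l + psiR c
      have : sgnIso c 0 = 0 := by
        ext i
        show epsR c i * (0 : EuclideanSpace ℝ (Fin n)) i = (0 : EuclideanSpace ℝ (Fin n)) i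
        simp
      rw [this, add_zero]
    · apply Set.Subset.antisymm
      · rintro w ⟨v, hv, rfl⟩
        exact mapsTo l hl c hc v hv
      · intro w hw
        -- preimage of w is (l* + psiR c) + sgnIso c w with l* := fun i => epsR c i * (-l i)
        set F := (sgnIso c).trans (IsometryEquiv.addLeft (l + psiR c)) with hF
        refine ⟨F.symm w, ?_, F.apply_symm_apply w⟩
        set l3 : EuclideanSpace ℝ (Fin n) := WithLp.toLp 2 (fun i => epsR c i * (-l i)) with hl3
        have hsymmw : F.symm w = (l3 + psiR c) + sgnIso c w := by
          rw [IsometryEquiv.symm_apply_eq]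
          ext i
          show w i = (l i + ((c i).val : ℝ))
            + epsR c i * ((epsR c i * (-l i)) + ((c i).val : ℝ) + epsR c i * w i)
          rcases zmod2_cases (c i) with h|h <;>
            simp [epsR, h, ZMod.val_one] <;> ring
        rw [hsymmw]
        exact mapsTo l3 (flipEps c (-l) (Λ.neg_mem hl)) c hc w hw
  rintro x hx y hy
  obtain ⟨l1, hl1, c1, hc1, rfl⟩ := hx
  obtain ⟨l2, hl2, c2, hc2, rfl⟩ := hy
  obtain ⟨F1, hF10, hF1img⟩ := main l1 hl1 c1 hc1
  obtain ⟨F2, hF20, hF2img⟩ := main l2 hl2 c2 hc2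
  refine ⟨F1.symm.trans F2, ?_, ?_⟩
  · show F2 (F1.symm (l1 + psiR c1)) = l2 + psiR c2
    rw [← hF10, F1.symm_apply_apply, hF20]
  · have hsymm : F1.symm '' Γ = Γ := by
      conv_lhs => rw [← hF1img]
      rw [Set.image_image]
      simp [F1.symm_apply_apply]
    rw [show ⇑(F1.symm.trans F2) = ⇑F2 ∘ ⇑F1.symm from rfl, Set.image_comp, hsymm, hF2img]
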